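/- Let p_1, …, p_m in [0,1] and q in (0,1), let S_BH be the output of the BH procedure at level q applied to (p_1, …, p_m), and write R = |S_BH|. Fix j in [m] with p_j ≤ q·R/m. Let p'_1, …, p'_m in [0,1] satisfy p'_j = 0 and, for every ℓ ≠ j, either (p'_ℓ = p_ℓ and p_ℓ ≥ p_j) or (p_ℓ ≤ p_j and p'_ℓ ≤ p_j). Then the BH procedure at level q applied to (p'_1, …, p'_m) produces a selection set of exactly the same size: |BH(p')| = R. -/
import Mathlib


/-- The pruning threshold `r*(λ) = max{r ∈ {0,…,m} : #{j : p_j ≤ q·R̂_j/m and λ_j·R̂_j ≤ r} ≥ r}`. -/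
noncomputable def prunedThreshold (m : ℕ) (q : ℝ) (p R lam : Fin m → ℝ) : ℕ :=
  Nat.findGreatest
    (fun r => r ≤ Set.ncard {j : Fin m | p j ≤ q * R j / m ∧ lam j * R j ≤ (r : ℝ)}) m

/-- The pruned selection set `S(λ) = {j : p_j ≤ q·R̂_j/m and λ_j·R̂_j ≤ r*(λ)}`. -/
noncomputable def prunedSet (m : ℕ) (q : ℝ) (p R lam : Fin m → ℝ) : Set (Fin m) :=
  {j : Fin m | p j ≤ q * R j / m ∧ lam j * R j ≤ (prunedThreshold m q p R lam : ℝ)}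

/-- The BH index `r*_BH = max{r ∈ {0,…,m} : #{j : p_j ≤ q·r/m} ≥ r}`. -/
noncomputable def bhThreshold (m : ℕ) (q : ℝ) (p : Fin m → ℝ) : ℕ :=
  Nat.findGreatest (fun r => r ≤ Set.ncard {j : Fin m | p j ≤ q * (r : ℝ) / m}) m

/-- The BH selection set `S_BH = {j : p_j ≤ q·r*_BH/m}`. -/
noncomputable def bhSet (m : ℕ) (q : ℝ) (p : Fin m → ℝ) : Set (Fin m) :=
  {j : Fin m | p j ≤ q * (bhThreshold m q p : ℝ) / m}

private lemma bh_count_le (m : ℕ) (q : ℝ) (p : Fin m → ℝ) (r : ℕ) :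
    Set.ncard {ℓ : Fin m | p ℓ ≤ q * (r : ℝ) / m} ≤ m := by
  calc Set.ncard {ℓ : Fin m | p ℓ ≤ q * (r : ℝ) / m}
      ≤ Set.ncard (Set.univ : Set (Fin m)) :=
        Set.ncard_le_ncard (Set.subset_univ _) Set.finite_univ
    _ = m := by simp [Set.ncard_univ]

private lemma bh_spec' (m : ℕ) (q : ℝ) (p : Fin m → ℝ) :
    bhThreshold m q p ≤ Set.ncard {ℓ : Fin m | p ℓ ≤ q * ((bhThreshold m q p : ℕ) : ℝ) / m} :=
  Nat.findGreatest_spec (P := fun r => r ≤ Set.ncard {ℓ : Fin m | p ℓ ≤ q * (r : ℝ) / m})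
    (Nat.zero_le m) (Nat.zero_le _)

private lemma bh_greatest (m : ℕ) (q : ℝ) (p : Fin m → ℝ) {r : ℕ}
    (h1 : bhThreshold m q p < r) (h2 : r ≤ m) :
    Set.ncard {ℓ : Fin m | p ℓ ≤ q * (r : ℝ) / m} < r := by
  have := Nat.findGreatest_is_greatest
    (P := fun r => r ≤ Set.ncard {ℓ : Fin m | p ℓ ≤ q * (r : ℝ) / m}) h1 h2
  exact Nat.lt_of_not_le this

private lemma bh_le (m : ℕ) (q : ℝ) (p : Fin m → ℝ) {r : ℕ}
    (h1 : r ≤ m) (h2 : r ≤ Set.ncard {ℓ : Fin m | p ℓ ≤ q * (r : ℝ) / m}) :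
    r ≤ bhThreshold m q p :=
  Nat.le_findGreatest (P := fun r => r ≤ Set.ncard {ℓ : Fin m | p ℓ ≤ q * (r : ℝ) / m}) h1 h2

private lemma count_mono (m : ℕ) (q : ℝ) (hq : 0 ≤ q) (p : Fin m → ℝ) {r s : ℕ} (h : r ≤ s) :
    {ℓ : Fin m | p ℓ ≤ q * (r : ℝ) / m} ⊆ {ℓ : Fin m | p ℓ ≤ q * (s : ℝ) / m} := by
  intro ℓ hl
  rcases Nat.eq_zero_or_pos m with hm | hm
  · subst hm; exact ℓ.elim0
  have hmr : (0:ℝ) ≤ (m:ℝ) := by positivity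
  have : q * (r : ℝ) / m ≤ q * (s : ℝ) / m :=
    div_le_div_of_nonneg_right
      (mul_le_mul_of_nonneg_left (by exact_mod_cast h) hq) hmr
  exact le_trans hl this

private lemma bh_card_eq (m : ℕ) (q : ℝ) (hq : 0 ≤ q) (p : Fin m → ℝ) :
    Set.ncard (bhSet m q p) = bhThreshold m q p := by
  have hspec := bh_spec' m q p
  have hset : bhSet m q p = {ℓ : Fin m | p ℓ ≤ q * ((bhThreshold m q p : ℕ) : ℝ) / m} := rfl
  rw [hset]
  refine le_antisymm ?_ hspec
  by_contra hlt
  push_neg at hlt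
  have hRm : bhThreshold m q p ≤ m :=
    Nat.findGreatest_le (P := fun r => r ≤ Set.ncard {ℓ : Fin m | p ℓ ≤ q * (r : ℝ) / m}) m
  rcases eq_or_lt_of_le hRm with heq | hlt'
  · have := bh_count_le m q p (bhThreshold m q p)
    omega
  · have hsub := count_mono m q hq p (Nat.le_succ (bhThreshold m q p))
    have hmono := Set.ncard_le_ncard hsub (Set.toFinite _)
    have hP : bhThreshold m q p + 1
        ≤ Set.ncard {ℓ : Fin m | p ℓ ≤ q * (((bhThreshold m q p + 1 : ℕ)) : ℝ) / m} := by
      have : ((bhThreshold m q p).succ : ℕ) = bhThreshold m q p + 1 := rfl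
      rw [← this]
      omega
    have := bh_le m q p (by omega) hP
    omega

/-- Let S_BH be the BH set at level q for p, with R = |S_BH|, and let j satisfy
p_j ≤ q·R/m.  If p' has p'_j = 0 and, for every ℓ ≠ j, either (p'_ℓ = p_ℓ and p_ℓ ≥ p_j) or
(p_ℓ ≤ p_j and p'_ℓ ≤ p_j), then BH applied to p' selects exactly R indices. -/
theorem bh_card_stable_under_replacement
    (m : ℕ) (q : ℝ) (hq : q ∈ Set.Ioo (0 : ℝ) 1)
    (p : Fin m → ℝ) (hp : ∀ j, p j ∈ Set.Icc (0 : ℝ) 1)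
    (j : Fin m) (hj : p j ≤ q * (Set.ncard (bhSet m q p) : ℝ) / m)
    (p' : Fin m → ℝ) (hp' : ∀ ℓ, p' ℓ ∈ Set.Icc (0 : ℝ) 1)
    (hj' : p' j = 0)
    (hrepl : ∀ ℓ, ℓ ≠ j →
      (p' ℓ = p ℓ ∧ p j ≤ p ℓ) ∨ (p ℓ ≤ p j ∧ p' ℓ ≤ p j)) :
    Set.ncard (bhSet m q p') = Set.ncard (bhSet m q p) := by
  have hm : 0 < m := j.pos
  have hmr : (0:ℝ) < (m:ℝ) := by exact_mod_cast hm
  have hq0 : 0 ≤ q := le_of_lt hq.1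
  have hcard : Set.ncard (bhSet m q p) = bhThreshold m q p := bh_card_eq m q hq0 p
  rw [hcard] at hj ⊢
  have hRm : bhThreshold m q p ≤ m :=
    Nat.findGreatest_le (P := fun r => r ≤ Set.ncard {ℓ : Fin m | p ℓ ≤ q * (r : ℝ) / m}) m
  have hthr0 : (0:ℝ) ≤ q * ((bhThreshold m q p : ℕ) : ℝ) / m :=
    div_nonneg (mul_nonneg hq0 (Nat.cast_nonneg _)) (le_of_lt hmr)
  -- For any r ≥ R : {p' ≤ q r / m} ⊆ {p ≤ q r / m}
  have hsub1 : ∀ r : ℕ, bhThreshold m q p ≤ r →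
      {ℓ : Fin m | p' ℓ ≤ q * (r : ℝ) / m} ⊆ {ℓ : Fin m | p ℓ ≤ q * (r : ℝ) / m} := by
    intro r hr ℓ hl
    have hthr : q * ((bhThreshold m q p : ℕ) : ℝ) / m ≤ q * (r : ℝ) / m :=
      div_le_div_of_nonneg_right
        (mul_le_mul_of_nonneg_left (by exact_mod_cast hr) hq0) hmr.le
    simp only [Set.mem_setOf_eq] at hl ⊢
    by_cases hℓj : ℓ = j
    · subst hℓj; exact le_trans hj hthr
    · rcases hrepl ℓ hℓj with ⟨he, _⟩ | ⟨hle, _⟩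
      · rw [← he]; exact hl
      · exact le_trans hle (le_trans hj hthr)
  -- {p ≤ q R / m} ⊆ {p' ≤ q R / m}
  have hsub2 : {ℓ : Fin m | p ℓ ≤ q * ((bhThreshold m q p : ℕ) : ℝ) / m}
      ⊆ {ℓ : Fin m | p' ℓ ≤ q * ((bhThreshold m q p : ℕ) : ℝ) / m} := by
    intro ℓ hl
    simp only [Set.mem_setOf_eq] at hl ⊢
    by_cases hℓj : ℓ = j
    · subst hℓj; rw [hj']; exact hthr0
    · rcases hrepl ℓ hℓj with ⟨he, _⟩ | ⟨_, hle⟩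
      · rw [he]; exact hl
      · exact le_trans hle hj
  have hspec := bh_spec' m q p
  -- threshold for p' is ≥ R
  have hge : bhThreshold m q p ≤ bhThreshold m q p' := by
    refine bh_le m q p' hRm ?_
    have := Set.ncard_le_ncard hsub2 (Set.toFinite _)
    omega
  -- threshold for p' is ≤ R
  have hle : bhThreshold m q p' ≤ bhThreshold m q p := by
    by_contra hcon
    push_neg at hcon
    have hTm : bhThreshold m q p' ≤ m :=
      Nat.findGreatest_le (P := fun r => r ≤ Set.ncard {ℓ : Fin m | p' ℓ ≤ q * (r : ℝ) / m}) m
    have hTspec := bh_spec' m q p'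
    have h1 := Set.ncard_le_ncard (hsub1 (bhThreshold m q p') (le_of_lt hcon)) (Set.toFinite _)
    have h2 := bh_greatest m q p hcon hTm
    omega
  have hTeq : bhThreshold m q p' = bhThreshold m q p := le_antisymm hle hge
  rw [bh_card_eq m q hq0 p', hTeq]
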